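/- Fixed-point characterization: if Ω ⊆ X satisfies Ω ⊆ Pre^M(Ω, W), then Ω is robust M-step hold control invariant; i.e., from every x_0 ∈ Ω there exists an infinite M-step hold input sequence keeping the state in X at every time step and in Ω at every multiple of M, for all admissible disturbance realizations. -/

import Mathlib

/-- Robust `M`-step hold precursor set `Pre^M(S, W)` with time-varying
disturbance sets `W_t`. -/
def holdPre {n m o : ℕ} (A : Matrix (Fin n) (Fin n) ℝ)
    (B : Matrix (Fin n) (Fin m) ℝ) (E : Matrix (Fin n) (Fin o) ℝ)
    (X : Set (Fin n → ℝ)) (U : Set (Fin m → ℝ)) (W : ℕ → Set (Fin o → ℝ))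
    (M : ℕ) (S : Set (Fin n → ℝ)) : Set (Fin n → ℝ) :=
  {x0 | ∃ u ∈ U, ∀ w : ℕ → (Fin o → ℝ), (∀ t, w t ∈ W t) →
    ∀ x : ℕ → (Fin n → ℝ), x 0 = x0 →
      (∀ t, x (t + 1) = A.mulVec (x t) + B.mulVec u + E.mulVec (w t)) →
      (∀ t, 0 < t → t < M → x t ∈ X) ∧ x M ∈ S}

/-- Fixed-point characterization: if `Ω ⊆ X` satisfies `Ω ⊆ Pre^M(Ω, W)` (with
`M`-periodic disturbance sets), then `Ω` is robust `M`-step hold control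
invariant: there is a feedback policy `π`, applied with an `M`-step hold
(`u_t = π(x_{M⌊t/M⌋})`), whose closed-loop trajectories from any `x_0 ∈ Ω` use
admissible inputs, stay in `X` at every time step, and lie in `Ω` at every
multiple of `M`, for all admissible disturbance realizations. -/
theorem fixed_point_invariance {n m o : ℕ} (A : Matrix (Fin n) (Fin n) ℝ)
    (B : Matrix (Fin n) (Fin m) ℝ) (E : Matrix (Fin n) (Fin o) ℝ)
    (X : Set (Fin n → ℝ)) (U : Set (Fin m → ℝ)) (W : ℕ → Set (Fin o → ℝ))
    (M : ℕ) (hM : 0 < M) (hWper : ∀ t, W (t + M) = W t)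
    (Ω : Set (Fin n → ℝ)) (hΩX : Ω ⊆ X) (hfix : Ω ⊆ holdPre A B E X U W M Ω) :
    ∃ π : (Fin n → ℝ) → (Fin m → ℝ),
      ∀ x0 ∈ Ω, ∀ w : ℕ → (Fin o → ℝ), (∀ t, w t ∈ W t) →
        ∀ x : ℕ → (Fin n → ℝ), x 0 = x0 →
          (∀ t, x (t + 1) =
            A.mulVec (x t) + B.mulVec (π (x (M * (t / M)))) + E.mulVec (w t)) →
          (∀ t, π (x (M * (t / M))) ∈ U) ∧ (∀ t, x t ∈ X) ∧
            (∀ t, M ∣ t → x t ∈ Ω) := by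
  classical
  refine ⟨fun z => if h : z ∈ Ω then (hfix h).choose else 0, ?_⟩
  intro x0 hx0 w hw x hx0eq hdyn
  have hWshift : ∀ k t, W (M * k + t) = W t := by
    intro k
    induction k with
    | zero => intro t; simp
    | succ k ih =>
      intro t
      have h1 : M * (k + 1) + t = (M * k + t) + M := by ring
      rw [h1, hWper, ih]
  have key : ∀ k, x (M * k) ∈ Ω →
      (∀ r, 0 < r → r < M → x (M * k + r) ∈ X) ∧ x (M * k + M) ∈ Ω := by
    intro k hk
    obtain ⟨huU, hP⟩ := (hfix hk).choose_spec
    set u := (hfix hk).choose with hu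
    set y : ℕ → (Fin n → ℝ) := fun t =>
      Nat.rec (x (M * k))
        (fun s ys => A.mulVec ys + B.mulVec u + E.mulVec (w (M * k + s))) t
      with hy
    have hy0 : y 0 = x (M * k) := rfl
    have hystep : ∀ s, y (s + 1) =
        A.mulVec (y s) + B.mulVec u + E.mulVec (w (M * k + s)) := fun s => rfl
    obtain ⟨hX', hΩ'⟩ := hP (fun s => w (M * k + s))
      (fun s => by rw [← hWshift k s]; exact hw _) y rfl hystep
    have hyeq : ∀ s, s ≤ M → y s = x (M * k + s) := by
      intro s
      induction s with
      | zero => intro _; simp [hy0]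
      | succ s ih =>
        intro hs
        have hsM : s < M := Nat.lt_of_succ_le hs
        have hdiv : (M * k + s) / M = k := by
          rw [Nat.mul_add_div hM, Nat.div_eq_of_lt hsM, Nat.add_zero]
        have hd := hdyn (M * k + s)
        rw [hdiv] at hd
        rw [hystep s, ih (le_of_lt hsM)]
        have hrw : M * k + (s + 1) = M * k + s + 1 := rfl
        rw [hrw, hd]
        simp only [dif_pos hk]
        rfl
    refine ⟨fun r hr hrM => ?_, ?_⟩
    · rw [← hyeq r (le_of_lt hrM)]; exact hX' r hr hrM
    · rw [← hyeq M le_rfl]; exact hΩ'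
  have inv : ∀ k, x (M * k) ∈ Ω := by
    intro k
    induction k with
    | zero => simpa [hx0eq] using hx0
    | succ k ih =>
      have h2 := (key k ih).2
      rwa [show M * k + M = M * (k + 1) by ring] at h2
  refine ⟨fun t => ?_, fun t => ?_, fun t ht => ?_⟩
  · have h := inv (t / M)
    simp only [dif_pos h]
    exact (hfix h).choose_spec.1
  · rcases Nat.eq_zero_or_pos (t % M) with h0 | hpos
    · have ht : M * (t / M) = t := Nat.mul_div_cancel' (Nat.dvd_of_mod_eq_zero h0)
      exact hΩX (ht ▸ inv (t / M))
    · have h := (key (t / M) (inv (t / M))).1 (t % M) hpos (Nat.mod_lt _ hM)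
      rwa [Nat.div_add_mod] at h
  · obtain ⟨k, rfl⟩ := ht
    exact inv k
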